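/- Let S be a nonempty h-admissible set and m := m(S). For all n ≥ m + h(m) − 1, 𝓘_h(S;n) = Σ_{k=0}^{m} a_k(S) · C(n − h(m) + 1, k), where a_k(S) := #{π ∈ I_h(S, m + h(m) − 1) : {π_1, …, π_m} ∩ [h(m), m + h(m) − 1] = [h(m), h(m) + k − 1]} (with [h(m), h(m)−1] understood as the empty set when k = 0). -/

import Mathlib

open Finset

/-- The 1-based `k`-th entry (as a value in `{1,…,n}`) of a permutation of `Fin n`. -/
def entry {n : ℕ} (π : Equiv.Perm (Fin n)) (k : ℕ) : ℕ :=
  if hk : k - 1 < n then ((π ⟨k - 1, hk⟩ : Fin n) : ℕ) + 1 else 0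

/-- The set of possible h-inversions `P_h = {(i,j) : 0 < i, i < j ≤ h i}`. -/
def Ph (h : ℕ → ℕ) : Set (ℕ × ℕ) := {p | 0 < p.1 ∧ p.1 < p.2 ∧ p.2 ≤ h p.1}

/-- The set of h-inversions of a permutation `π ∈ S_n`, as 1-based pairs:
`inv_h(π) = {(i,j) : i < j ≤ min(h i, n), π_i > π_j}`. -/
def invh (h : ℕ → ℕ) {n : ℕ} (π : Equiv.Perm (Fin n)) : Finset (ℕ × ℕ) :=
  ((Finset.univ : Finset (Fin n × Fin n)).filter
      (fun p => (p.1 : ℕ) < (p.2 : ℕ) ∧ (p.2 : ℕ) + 1 ≤ h ((p.1 : ℕ) + 1) ∧ π p.2 < π p.1)).image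
    (fun p => ((p.1 : ℕ) + 1, (p.2 : ℕ) + 1))

/-- `I_h(S,n)`, the set of permutations of `S_n` with h-inversion set `S`. -/
def Ih (h : ℕ → ℕ) (S : Finset (ℕ × ℕ)) (n : ℕ) : Finset (Equiv.Perm (Fin n)) :=
  Finset.univ.filter (fun π => invh h π = S)

/-- `𝓘_h(S;n) = #I_h(S,n)`. -/
def Icount (h : ℕ → ℕ) (S : Finset (ℕ × ℕ)) (n : ℕ) : ℕ := (Ih h S n).card

/-- `S` is h-admissible when it is the h-inversion set of some permutation. -/
def Admissible (h : ℕ → ℕ) (S : Finset (ℕ × ℕ)) : Prop := ∃ n, (Ih h S n).Nonempty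

/-- `j(S)`, the largest index appearing in a pair of `S`. -/
def jS (S : Finset (ℕ × ℕ)) : ℕ := S.sup Prod.snd

/-- `m(S)`, the maximum descent of `S`. -/
def mS (S : Finset (ℕ × ℕ)) : ℕ := (S.filter fun p => p.2 = p.1 + 1).sup Prod.fst

/-- `t(σ) = max{σ_k : 1 ≤ k ≤ j(S), h(k) ≥ j(S)+1}`. -/
def tOf (h : ℕ → ℕ) (S : Finset (ℕ × ℕ)) (σ : Equiv.Perm (Fin (jS S))) : ℕ :=
  ((Finset.Icc 1 (jS S)).filter fun k => jS S + 1 ≤ h k).sup (entry σ)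

/-- `B_k(S,n)`, the permutations in `I_h(S,n)` with entry `k` in position `h(m(S))`. -/
def Bset (h : ℕ → ℕ) (S : Finset (ℕ × ℕ)) (k n : ℕ) : Finset (Equiv.Perm (Fin n)) :=
  (Ih h S n).filter fun π => entry π (h (mS S)) = k

/-- The coefficient `b_k(S) = #B_k(S, h(m(S)))`. -/
def bCoeff (h : ℕ → ℕ) (S : Finset (ℕ × ℕ)) (k : ℕ) : ℕ := (Bset h S k (h (mS S))).card

/-- The coefficient `a_k(S)`. -/
def aCoeff (h : ℕ → ℕ) (S : Finset (ℕ × ℕ)) (k : ℕ) : ℕ :=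
  ((Ih h S (mS S + h (mS S) - 1)).filter fun π =>
    ((Finset.Icc 1 (mS S)).image (entry π)) ∩ Finset.Icc (h (mS S)) (mS S + h (mS S) - 1)
      = Finset.Icc (h (mS S)) (h (mS S) + k - 1)).card

/-- The length (number of inversions) of a permutation. -/
def lenPerm {n : ℕ} (π : Equiv.Perm (Fin n)) : ℕ :=
  ((Finset.univ : Finset (Fin n × Fin n)).filter fun p => p.1 < p.2 ∧ π p.2 < π p.1).card

/-- `ℓ_{[a,b]}(A) = #{(x,y) ∈ [a,b]² : x > y, x ∈ A, y ∉ A}`. -/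
def lenSet (a b : ℕ) (A : Finset ℕ) : ℕ :=
  ((Finset.Icc a b ×ˢ Finset.Icc a b).filter fun q => q.2 < q.1 ∧ q.1 ∈ A ∧ q.2 ∉ A).card


namespace Stmt8

/-- complement of the first-m-values set inside [1,n] -/
def comp (n : ℕ) {m : ℕ} (v : Fin m → ℕ) : Finset ℕ :=
  (Finset.Icc 1 n) \ (Finset.image v Finset.univ)

def csort (n : ℕ) {m : ℕ} (v : Fin m → ℕ) : List ℕ :=
  (comp n v).sort (· ≤ ·)

structure Valid (n : ℕ) {m : ℕ} (v : Fin m → ℕ) : Prop where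
  inj : Function.Injective v
  vmem : ∀ i, v i ∈ Finset.Icc 1 n
  mle : m ≤ n

theorem Valid.card_comp {n m : ℕ} {v : Fin m → ℕ} (hv : Valid n v) :
    (comp n v).card = n - m := by
  have hsub : Finset.image v Finset.univ ⊆ Finset.Icc 1 n := by
    intro x hx
    rcases Finset.mem_image.1 hx with ⟨i, _, rfl⟩
    exact hv.vmem i
  have hcard : (Finset.image v Finset.univ).card = m := by
    rw [Finset.card_image_of_injective _ hv.inj, Finset.card_univ, Fintype.card_fin]
  rw [comp, Finset.card_sdiff_of_subset hsub, hcard, Nat.card_Icc]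
  omega

theorem length_csort {n m : ℕ} {v : Fin m → ℕ} (hv : Valid n v) :
    (csort n v).length = n - m := by
  rw [csort, Finset.length_sort, hv.card_comp]

theorem csort_sorted (n : ℕ) {m : ℕ} (v : Fin m → ℕ) :
    (csort n v).Pairwise (· < ·) := (Finset.sortedLT_sort _).pairwise

theorem getD_mem_comp {n m : ℕ} {v : Fin m → ℕ} (hv : Valid n v) {t : ℕ}
    (ht : t < n - m) : (csort n v).getD t 1 ∈ comp n v := by
  have ht' : t < (csort n v).length := by rw [length_csort hv]; exact ht
  rw [List.getD_eq_getElem _ _ ht']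
  exact (Finset.mem_sort _).1 (List.getElem_mem ht')

theorem csort_strictMono {n m : ℕ} {v : Fin m → ℕ} (hv : Valid n v) {s t : ℕ}
    (hst : s < t) (ht : t < n - m) :
    (csort n v).getD s 1 < (csort n v).getD t 1 := by
  have ht' : t < (csort n v).length := by rw [length_csort hv]; exact ht
  have hs' : s < (csort n v).length := lt_trans hst ht'
  rw [List.getD_eq_getElem _ _ ht', List.getD_eq_getElem _ _ hs']
  exact List.pairwise_iff_getElem.1 (csort_sorted n v) s t hs' ht' hst

/-- number of complement elements below x -/
def rk (n : ℕ) {m : ℕ} (v : Fin m → ℕ) (x : ℕ) : ℕ :=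
  ((comp n v).filter (· < x)).card

theorem getD_lt_iff {n m : ℕ} {v : Fin m → ℕ} (hv : Valid n v) {t x : ℕ}
    (ht : t < n - m) : (csort n v).getD t 1 < x ↔ t < rk n v x := by
  constructor
  · intro hlt
    have hsub : (Finset.range (t+1)).image (fun s => (csort n v).getD s 1)
        ⊆ (comp n v).filter (· < x) := by
      intro y hy
      rcases Finset.mem_image.1 hy with ⟨s, hs, rfl⟩
      have hs' : s < t + 1 := Finset.mem_range.1 hs
      have hsle : s ≤ t := by omega
      have hsn : s < n - m := lt_of_le_of_lt hsle ht
      refine Finset.mem_filter.2 ⟨getD_mem_comp hv hsn, ?_⟩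
      rcases lt_or_eq_of_le hsle with hst | rfl
      · exact lt_trans (csort_strictMono hv hst ht) hlt
      · exact hlt
    have hinj : Set.InjOn (fun s => (csort n v).getD s 1) (Finset.range (t+1)) := by
      intro a ha b hb hab
      simp only [Finset.coe_range, Set.mem_Iio] at ha hb
      rcases lt_trichotomy a b with hlt' | h | hlt'
      · exact absurd hab (ne_of_lt (csort_strictMono hv hlt' (by omega)))
      · exact h
      · exact absurd hab.symm (ne_of_lt (csort_strictMono hv hlt' (by omega)))
    have := Finset.card_le_card hsub
    rwa [Finset.card_image_of_injOn hinj, Finset.card_range] at this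
  · intro hrk
    by_contra hle
    push_neg at hle
    have hsub : (comp n v).filter (· < x) ⊆ (Finset.range t).image
        (fun s => (csort n v).getD s 1) := by
      intro y hy
      rcases Finset.mem_filter.1 hy with ⟨hyc, hyx⟩
      have : y ∈ csort n v := (Finset.mem_sort _).2 hyc
      rcases List.mem_iff_getElem.1 this with ⟨s, hs, rfl⟩
      have hslen : s < n - m := by rwa [length_csort hv] at hs
      rw [← List.getD_eq_getElem _ 1 hs] at hyx ⊢
      refine Finset.mem_image.2 ⟨s, Finset.mem_range.2 ?_, rfl⟩
      by_contra hts
      push_neg at hts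
      rcases lt_or_eq_of_le hts with h1 | rfl
      · exact absurd (lt_trans (csort_strictMono hv h1 hslen) hyx) (not_lt.2 hle)
      · exact absurd hyx (not_lt.2 hle)
    have := Finset.card_le_card hsub
    have h2 := le_trans this (Finset.card_image_le)
    rw [Finset.card_range] at h2
    exact absurd hrk (not_lt.2 h2)


theorem mem_invh {h : ℕ → ℕ} {n : ℕ} {π : Equiv.Perm (Fin n)} {a b : ℕ} :
    (a, b) ∈ invh h π ↔ 1 ≤ a ∧ a < b ∧ b ≤ n ∧ b ≤ h a ∧ entry π b < entry π a := by
  simp only [invh, Finset.mem_image, Finset.mem_filter, Finset.mem_univ, true_and, Prod.exists,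
    Prod.mk.injEq]
  constructor
  · rintro ⟨i, j, ⟨hij, hjh, hπ⟩, rfl, rfl⟩
    have hi : (i : ℕ) < n := i.2
    have hj : (j : ℕ) < n := j.2
    refine ⟨by omega, by omega, by omega, by simpa using hjh, ?_⟩
    have e1 : entry π ((j : ℕ) + 1) = (π j : ℕ) + 1 := by
      simp only [entry, Nat.add_sub_cancel, hj, dif_pos]
    have e2 : entry π ((i : ℕ) + 1) = (π i : ℕ) + 1 := by
      simp only [entry, Nat.add_sub_cancel, hi, dif_pos]
    rw [e1, e2]
    exact Nat.add_lt_add_right hπ 1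
  · rintro ⟨ha, hab, hbn, hbh, hent⟩
    have hia : a - 1 < n := by omega
    have hib : b - 1 < n := by omega
    refine ⟨⟨a - 1, hia⟩, ⟨b - 1, hib⟩, ⟨?_, ?_, ?_⟩, ?_, ?_⟩
    · show a - 1 < b - 1
      omega
    · show b - 1 + 1 ≤ h (a - 1 + 1)
      have hae : a - 1 + 1 = a := by omega
      rw [hae]; omega
    · have e1 : entry π b = (π ⟨b - 1, hib⟩ : ℕ) + 1 := by
        simp only [entry, hib, dif_pos]
      have e2 : entry π a = (π ⟨a - 1, hia⟩ : ℕ) + 1 := by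
        simp only [entry, hia, dif_pos]
      rw [e1, e2] at hent
      exact Fin.lt_def.2 (by omega)
    · show a - 1 + 1 = a
      omega
    · show b - 1 + 1 = b
      omega


def gnat (n : ℕ) {m : ℕ} (v : Fin m → ℕ) (i : ℕ) : ℕ :=
  if h : i < m then v ⟨i, h⟩ - 1 else (csort n v).getD (i - m) 1 - 1

def gfun (n : ℕ) {m : ℕ} (v : Fin m → ℕ) (i : Fin n) : Fin n :=
  if h : gnat n v (i : ℕ) < n then ⟨gnat n v (i : ℕ), h⟩ else i

theorem comp_bounds {n m : ℕ} {v : Fin m → ℕ} {x : ℕ} (hx : x ∈ comp n v) : 1 ≤ x ∧ x ≤ n := by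
  have := (Finset.mem_sdiff.1 hx).1
  rw [Finset.mem_Icc] at this
  exact this

theorem comp_not_image {n m : ℕ} {v : Fin m → ℕ} {x : ℕ} (hx : x ∈ comp n v) (i : Fin m) :
    v i ≠ x := by
  intro hvi
  exact (Finset.mem_sdiff.1 hx).2 (Finset.mem_image.2 ⟨i, Finset.mem_univ i, hvi⟩)

theorem vge1 {n m : ℕ} {v : Fin m → ℕ} (hv : Valid n v) (i : Fin m) : 1 ≤ v i :=
  (Finset.mem_Icc.1 (hv.vmem i)).1

theorem vlen {n m : ℕ} {v : Fin m → ℕ} (hv : Valid n v) (i : Fin m) : v i ≤ n :=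
  (Finset.mem_Icc.1 (hv.vmem i)).2

theorem gnat_lt {n m : ℕ} {v : Fin m → ℕ} (hv : Valid n v) (i : Fin n) :
    gnat n v (i : ℕ) < n := by
  unfold gnat
  split
  · have h1 := vge1 hv ⟨(i : ℕ), by assumption⟩
    have h2 := vlen hv ⟨(i : ℕ), by assumption⟩
    omega
  · have him : m ≤ (i : ℕ) := le_of_not_gt (by assumption)
    have hi : (i : ℕ) < n := i.2
    have hlt : (i : ℕ) - m < n - m := by omega
    have := comp_bounds (getD_mem_comp hv hlt)
    omega

theorem gnat_inj {n m : ℕ} {v : Fin m → ℕ} (hv : Valid n v) {i j : Fin n}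
    (hij : gnat n v (i : ℕ) = gnat n v (j : ℕ)) : i = j := by
  unfold gnat at hij
  have hi : (i : ℕ) < n := i.2
  have hj : (j : ℕ) < n := j.2
  by_cases h1 : (i : ℕ) < m <;> by_cases h2 : (j : ℕ) < m
  · rw [dif_pos h1, dif_pos h2] at hij
    have e1 := vge1 hv ⟨(i : ℕ), h1⟩
    have e2 := vge1 hv ⟨(j : ℕ), h2⟩
    have : v ⟨(i : ℕ), h1⟩ = v ⟨(j : ℕ), h2⟩ := by omega
    have h3 := hv.inj this
    have h4 := congrArg Fin.val h3
    exact Fin.ext h4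
  · rw [dif_pos h1, dif_neg h2] at hij
    have hlt : (j : ℕ) - m < n - m := by omega
    have hb := comp_bounds (getD_mem_comp hv hlt)
    have e1 := vge1 hv ⟨(i : ℕ), h1⟩
    have : v ⟨(i : ℕ), h1⟩ = (csort n v).getD ((j : ℕ) - m) 1 := by omega
    exact absurd this (comp_not_image (getD_mem_comp hv hlt) _)
  · rw [dif_neg h1, dif_pos h2] at hij
    have hlt : (i : ℕ) - m < n - m := by omega
    have hb := comp_bounds (getD_mem_comp hv hlt)
    have e2 := vge1 hv ⟨(j : ℕ), h2⟩
    have : v ⟨(j : ℕ), h2⟩ = (csort n v).getD ((i : ℕ) - m) 1 := by omega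
    exact absurd this (comp_not_image (getD_mem_comp hv hlt) _)
  · rw [dif_neg h1, dif_neg h2] at hij
    have hlti : (i : ℕ) - m < n - m := by omega
    have hltj : (j : ℕ) - m < n - m := by omega
    have hbi := comp_bounds (getD_mem_comp hv hlti)
    have hbj := comp_bounds (getD_mem_comp hv hltj)
    have heq : (csort n v).getD ((i : ℕ) - m) 1 = (csort n v).getD ((j : ℕ) - m) 1 := by omega
    rcases lt_trichotomy ((i : ℕ) - m) ((j : ℕ) - m) with hlt | he | hlt
    · exact absurd heq (ne_of_lt (csort_strictMono hv hlt hltj))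
    · exact Fin.ext (by omega)
    · exact absurd heq.symm (ne_of_lt (csort_strictMono hv hlt hlti))

theorem gfun_bij {n m : ℕ} {v : Fin m → ℕ} (hv : Valid n v) :
    Function.Bijective (gfun n v) := by
  rw [← Finite.injective_iff_bijective]
  intro i j heq
  unfold gfun at heq
  rw [dif_pos (gnat_lt hv i), dif_pos (gnat_lt hv j)] at heq
  exact gnat_inj hv (congrArg Fin.val heq)

open scoped Classical in
noncomputable def buildPerm (n : ℕ) {m : ℕ} (v : Fin m → ℕ) : Equiv.Perm (Fin n) :=
  if hb : Function.Bijective (gfun n v) then Equiv.ofBijective _ hb else 1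

theorem buildPerm_apply {n m : ℕ} {v : Fin m → ℕ} (hv : Valid n v) (i : Fin n) :
    ((buildPerm n v) i : ℕ) = gnat n v (i : ℕ) := by
  classical
  rw [buildPerm, dif_pos (gfun_bij hv)]
  show ((gfun n v i : Fin n) : ℕ) = _
  rw [gfun, dif_pos (gnat_lt hv i)]

theorem entry_buildPerm {n m : ℕ} {v : Fin m → ℕ} (hv : Valid n v) {a : ℕ}
    (h1 : 1 ≤ a) (h2 : a ≤ n) :
    entry (buildPerm n v) a =
      if h : a - 1 < m then v ⟨a - 1, h⟩ else (csort n v).getD (a - 1 - m) 1 := by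
  have han : a - 1 < n := by omega
  rw [entry, dif_pos han, buildPerm_apply hv]
  have hval : ((⟨a - 1, han⟩ : Fin n) : ℕ) = a - 1 := rfl
  rw [hval, gnat]
  by_cases ham : a - 1 < m
  · rw [dif_pos ham, dif_pos ham]
    have := vge1 hv ⟨a - 1, ham⟩
    omega
  · rw [dif_neg ham, dif_neg ham]
    have hmle : m ≤ a - 1 := le_of_not_gt ham
    have hlt : a - 1 - m < n - m := by omega
    have := comp_bounds (getD_mem_comp hv hlt)
    omega

theorem rk_large {n m H : ℕ} {v : Fin m → ℕ} (hv : Valid n v) (hHn : H ≤ n)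
    (i0 : Fin m) (hlarge : H ≤ v i0) {x : ℕ} (hx : H ≤ x) : H - m ≤ rk n v x := by
  classical
  have hm : 0 < m := i0.pos
  have hsub : (Finset.Icc 1 (H-1)) \ (Finset.image v Finset.univ) ⊆ (comp n v).filter (· < x) := by
    intro y hy
    rcases Finset.mem_sdiff.1 hy with ⟨hy1, hy2⟩
    rw [Finset.mem_Icc] at hy1
    exact Finset.mem_filter.2 ⟨Finset.mem_sdiff.2
      ⟨Finset.mem_Icc.2 ⟨hy1.1, by omega⟩, hy2⟩, by omega⟩
  have hsplit : (Finset.Icc 1 (H-1)) ⊆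
      ((Finset.Icc 1 (H-1)) \ (Finset.image v Finset.univ)) ∪
        ((Finset.image v Finset.univ).erase (v i0)) := by
    intro y hy
    by_cases hyV : y ∈ Finset.image v Finset.univ
    · refine Finset.mem_union_right _ (Finset.mem_erase.2 ⟨?_, hyV⟩)
      rw [Finset.mem_Icc] at hy
      intro hcon
      omega
    · exact Finset.mem_union_left _ (Finset.mem_sdiff.2 ⟨hy, hyV⟩)
  have hVcard : (Finset.image v Finset.univ).card = m := by
    rw [Finset.card_image_of_injective _ hv.inj, Finset.card_univ, Fintype.card_fin]
  have herase : ((Finset.image v Finset.univ).erase (v i0)).card = m - 1 := by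
    rw [Finset.card_erase_of_mem (Finset.mem_image.2 ⟨i0, Finset.mem_univ _, rfl⟩), hVcard]
  have h1 := le_trans (Finset.card_le_card hsplit) (Finset.card_union_le _ _)
  have h2 := Finset.card_le_card hsub
  have hIcc : (Finset.Icc 1 (H-1)).card = H - 1 := by rw [Nat.card_Icc]; omega
  unfold rk
  omega

theorem invh_buildPerm_aux {h : ℕ → ℕ} {H m n n' : ℕ} {v v' : Fin m → ℕ}
    (hv : Valid n v) (hv' : Valid n' v')
    (hHn : H ≤ n) (hHn' : H ≤ n')
    (hhm : ∀ a : ℕ, 1 ≤ a → a ≤ m → h a ≤ H)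
    (hsmall : ∀ i, v i < H ↔ v' i < H)
    (heqsmall : ∀ i, v i < H → v' i = v i)
    (horder : ∀ i j, v i < v j ↔ v' i < v' j)
    {a b : ℕ}
    (hmem : 1 ≤ a ∧ a < b ∧ b ≤ n ∧ b ≤ h a ∧
      entry (buildPerm n v) b < entry (buildPerm n v) a) :
    1 ≤ a ∧ a < b ∧ b ≤ n' ∧ b ≤ h a ∧
      entry (buildPerm n' v') b < entry (buildPerm n' v') a := by
  obtain ⟨ha1, hab, hbn, hbh, hent⟩ := hmem
  rw [entry_buildPerm hv (a := b) (by omega) hbn,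
      entry_buildPerm hv (a := a) ha1 (by omega)] at hent
  -- a must be ≤ m
  by_cases ham : a - 1 < m
  case neg =>
    exfalso
    have hbm : ¬ b - 1 < m := by omega
    rw [dif_neg ham, dif_neg hbm] at hent
    have hblt : b - 1 - m < n - m := by omega
    exact absurd hent (not_lt.2 (le_of_lt (csort_strictMono hv (by omega) hblt)))
  have haH : h a ≤ H := hhm a ha1 (by omega)
  refine ⟨ha1, hab, by omega, hbh, ?_⟩
  rw [entry_buildPerm hv' (a := b) (by omega) (by omega),
      entry_buildPerm hv' (a := a) ha1 (by omega)]
  rw [dif_pos ham] at hent ⊢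
  by_cases hbm : b - 1 < m
  · rw [dif_pos hbm] at hent ⊢
    exact (horder _ _).1 hent
  · rw [dif_neg hbm] at hent ⊢
    have hblt : b - 1 - m < n - m := by omega
    have hblt' : b - 1 - m < n' - m := by omega
    by_cases hvs : v ⟨a - 1, ham⟩ < H
    · -- small case: ranks agree
      have hveq : v' ⟨a - 1, ham⟩ = v ⟨a - 1, ham⟩ := heqsmall _ hvs
      rw [getD_lt_iff hv hblt] at hent
      rw [getD_lt_iff hv' hblt', hveq]
      have hrkeq : rk n' v' (v ⟨a - 1, ham⟩) = rk n v (v ⟨a - 1, ham⟩) := by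
        unfold rk
        congr 1
        ext y
        simp only [Finset.mem_filter, comp, Finset.mem_sdiff, Finset.mem_Icc,
          Finset.mem_image, Finset.mem_univ, true_and]
        constructor
        · rintro ⟨⟨⟨hy1, hy2⟩, hyv⟩, hyx⟩
          refine ⟨⟨⟨hy1, by omega⟩, ?_⟩, hyx⟩
          rintro ⟨i, rfl⟩
          have hviH : v i < H := by omega
          exact hyv ⟨i, heqsmall i hviH⟩
        · rintro ⟨⟨⟨hy1, hy2⟩, hyv⟩, hyx⟩
          refine ⟨⟨⟨hy1, by omega⟩, ?_⟩, hyx⟩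
          rintro ⟨i, rfl⟩
          have hv'iH : v' i < H := by omega
          have hviH : v i < H := (hsmall i).2 hv'iH
          exact hyv ⟨i, (heqsmall i hviH).symm⟩
      omega
    · -- large case
      push_neg at hvs
      have hvs' : H ≤ v' ⟨a - 1, ham⟩ := by
        by_contra hcon
        push_neg at hcon
        exact absurd ((hsmall _).2 hcon) (not_lt.2 hvs)
      rw [getD_lt_iff hv' hblt']
      have hrk := rk_large hv' hHn' ⟨a - 1, ham⟩ hvs' hvs'
      omega

theorem invh_buildPerm_eq {h : ℕ → ℕ} {H m n n' : ℕ} {v v' : Fin m → ℕ}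
    (hv : Valid n v) (hv' : Valid n' v')
    (hHn : H ≤ n) (hHn' : H ≤ n')
    (hhm : ∀ a : ℕ, 1 ≤ a → a ≤ m → h a ≤ H)
    (hsmall : ∀ i, v i < H ↔ v' i < H)
    (heqsmall : ∀ i, v i < H → v' i = v i)
    (horder : ∀ i j, v i < v j ↔ v' i < v' j) :
    invh h (buildPerm n v) = invh h (buildPerm n' v') := by
  have heqsmall' : ∀ i, v' i < H → v i = v' i := by
    intro i hi
    exact (heqsmall i ((hsmall i).2 hi)).symm
  ext ⟨a, b⟩
  rw [mem_invh, mem_invh]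
  constructor
  · exact invh_buildPerm_aux hv hv' hHn hHn' hhm hsmall heqsmall horder
  · exact invh_buildPerm_aux hv' hv hHn' hHn hhm
      (fun i => (hsmall i).symm) heqsmall' (fun i j => (horder i j).symm)

def vOf (m : ℕ) {n : ℕ} (π : Equiv.Perm (Fin n)) : Fin m → ℕ :=
  fun i => entry π ((i : ℕ) + 1)

theorem vOf_apply {m n : ℕ} (π : Equiv.Perm (Fin n)) (hmn : m ≤ n) (i : Fin m) :
    vOf m π i = (π ⟨(i : ℕ), lt_of_lt_of_le i.2 hmn⟩ : ℕ) + 1 := by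
  have hi : (i : ℕ) + 1 - 1 < n := by
    have := i.2; omega
  rw [vOf, entry, dif_pos hi]
  have heq : (⟨(i : ℕ) + 1 - 1, hi⟩ : Fin n) = ⟨(i : ℕ), lt_of_lt_of_le i.2 hmn⟩ :=
    Fin.ext (by show (i : ℕ) + 1 - 1 = (i : ℕ); omega)
  rw [heq]

theorem valid_vOf {m n : ℕ} (π : Equiv.Perm (Fin n)) (hmn : m ≤ n) :
    Valid n (vOf m π) := by
  constructor
  · intro i j hij
    rw [vOf_apply π hmn, vOf_apply π hmn] at hij
    have := π.injective (Fin.ext (by omega : ((π ⟨(i : ℕ), _⟩ : Fin n) : ℕ) = (π ⟨(j : ℕ), _⟩ : ℕ)))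
    have h4 := congrArg Fin.val this
    exact Fin.ext h4
  · intro i
    rw [vOf_apply π hmn]
    have := (π ⟨(i : ℕ), lt_of_lt_of_le i.2 hmn⟩).2
    rw [Finset.mem_Icc]
    omega
  · exact hmn

def MonoAfter (m : ℕ) {n : ℕ} (π : Equiv.Perm (Fin n)) : Prop :=
  ∀ i j : Fin n, m ≤ (i : ℕ) → i < j → π i < π j

theorem csort_vOf {m n : ℕ} (π : Equiv.Perm (Fin n)) (hmn : m ≤ n)
    (hmono : MonoAfter m π) :
    csort n (vOf m π) = List.ofFn (fun t : Fin (n - m) =>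
      (π ⟨m + (t : ℕ), by have := t.2; omega⟩ : ℕ) + 1) := by
  have hv := valid_vOf π hmn
  set L := List.ofFn (fun t : Fin (n - m) =>
      (π ⟨m + (t : ℕ), by have := t.2; omega⟩ : ℕ) + 1) with hL
  have hsortedL : L.Pairwise (· < ·) := by
    rw [hL, List.pairwise_ofFn]
    intro s t hst
    have h1 : m + (s : ℕ) < n := by have := s.2; omega
    have h2 : m + (t : ℕ) < n := by have := t.2; omega
    have hlt : π ⟨m + (s : ℕ), h1⟩ < π ⟨m + (t : ℕ), h2⟩ := by
      apply hmono
      · show m ≤ m + (s : ℕ)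
        omega
      · show (⟨m + (s : ℕ), h1⟩ : Fin n) < ⟨m + (t : ℕ), h2⟩
        rw [Fin.lt_def]
        show m + (s : ℕ) < m + (t : ℕ)
        have := Fin.lt_def.1 hst
        omega
    exact Nat.add_lt_add_right (Fin.lt_def.1 hlt) 1
  have hnodupL : L.Nodup := hsortedL.nodup
  have htoF : L.toFinset = comp n (vOf m π) := by
    ext x
    rw [List.mem_toFinset, hL, List.mem_ofFn]
    simp only [comp, Finset.mem_sdiff, Finset.mem_Icc, Finset.mem_image, Finset.mem_univ,
      true_and, Set.mem_range]
    constructor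
    · rintro ⟨t, rfl⟩
      have hval := (π ⟨m + (t : ℕ), by have := t.2; omega⟩).2
      refine ⟨⟨by omega, by omega⟩, ?_⟩
      rintro ⟨i, hi⟩
      rw [vOf_apply π hmn] at hi
      have := π.injective (Fin.ext (by omega :
        ((π ⟨(i : ℕ), lt_of_lt_of_le i.2 hmn⟩ : Fin n) : ℕ) = (π ⟨m + (t : ℕ), _⟩ : ℕ)))
      have h4 := congrArg Fin.val this
      simp at h4
      have := i.2
      omega
    · rintro ⟨⟨hx1, hx2⟩, hximg⟩
      set j := π.symm ⟨x - 1, by omega⟩ with hj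
      have hπj : π j = ⟨x - 1, by omega⟩ := π.apply_symm_apply _
      have hjm : m ≤ (j : ℕ) := by
        by_contra hcon
        push_neg at hcon
        apply hximg
        refine ⟨⟨(j : ℕ), hcon⟩, ?_⟩
        rw [vOf_apply π hmn]
        have : (⟨((⟨(j : ℕ), hcon⟩ : Fin m) : ℕ), _⟩ : Fin n) = j := Fin.ext rfl
        rw [this, hπj]
        simp
        omega
      refine ⟨⟨(j : ℕ) - m, by have := j.2; omega⟩, ?_⟩
      have : (⟨m + ((j : ℕ) - m), by have := j.2; omega⟩ : Fin n) = j :=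
        Fin.ext (by show m + ((j : ℕ) - m) = (j : ℕ); omega)
      rw [this, hπj]
      simp
      omega
  refine List.Perm.eq_of_pairwise'
    (Finset.pairwise_sort _ _) (hsortedL.imp le_of_lt)
    (List.perm_of_nodup_nodup_toFinset_eq (Finset.sort_nodup _ _) hnodupL ?_)
  rw [htoF, csort, Finset.sort_toFinset]

theorem buildPerm_vOf {m n : ℕ} (π : Equiv.Perm (Fin n)) (hmn : m ≤ n)
    (hmono : MonoAfter m π) : buildPerm n (vOf m π) = π := by
  have hv := valid_vOf π hmn
  apply Equiv.ext
  intro i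
  apply Fin.ext
  rw [buildPerm_apply hv, gnat]
  split
  case isTrue him =>
    rw [vOf_apply π hmn]
    have : (⟨((⟨(i : ℕ), him⟩ : Fin m) : ℕ), _⟩ : Fin n) = i := Fin.ext rfl
    rw [this]
    omega
  case isFalse him =>
    rw [csort_vOf π hmn hmono]
    have hi : (i : ℕ) < n := i.2
    have hlen : (i : ℕ) - m < (List.ofFn (fun t : Fin (n - m) =>
        (π ⟨m + (t : ℕ), by have := t.2; omega⟩ : ℕ) + 1)).length := by
      rw [List.length_ofFn]
      omega
    have hmi : m ≤ (i : ℕ) := le_of_not_gt him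
    rw [List.getD_eq_getElem _ _ hlen, List.getElem_ofFn]
    dsimp only
    have heq2 : (⟨m + ((i : ℕ) - m), by omega⟩ : Fin n) = i :=
      Fin.ext (by show m + ((i : ℕ) - m) = (i : ℕ); omega)
    rw [heq2]
    omega

theorem descent_le_mS {S : Finset (ℕ × ℕ)} {d : ℕ} (hd : (d, d + 1) ∈ S) : d ≤ mS S := by
  have hmem : (d, d + 1) ∈ S.filter (fun p => p.2 = p.1 + 1) :=
    Finset.mem_filter.2 ⟨hd, rfl⟩
  rw [mS]
  exact Finset.le_sup (f := Prod.fst) hmem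

theorem monoAfter_Ih {h : ℕ → ℕ} (hgt : ∀ i : ℕ, 0 < i → i < h i) {S : Finset (ℕ × ℕ)}
    {N : ℕ} {π : Equiv.Perm (Fin N)} (hπ : π ∈ Ih h S N) : MonoAfter (mS S) π := by
  have hinv : invh h π = S := (Finset.mem_filter.1 hπ).2
  have hadj : ∀ t : ℕ, mS S ≤ t → ∀ (h1 : t < N) (h2 : t + 1 < N),
      π ⟨t, h1⟩ < π ⟨t + 1, h2⟩ := by
    intro t hmt h1 h2
    by_contra hcon
    push_neg at hcon
    have hne : π ⟨t + 1, h2⟩ ≠ π ⟨t, h1⟩ := by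
      intro he
      have := congrArg Fin.val (π.injective he)
      simp at this
    have hlt : π ⟨t + 1, h2⟩ < π ⟨t, h1⟩ := lt_of_le_of_ne hcon hne
    have hdes : (t + 1, t + 2) ∈ invh h π := by
      rw [mem_invh]
      have hh := hgt (t + 1) (by omega)
      have e1 : entry π (t + 2) = (π ⟨t + 1, h2⟩ : ℕ) + 1 := by
        rw [entry, dif_pos (show t + 2 - 1 < N by omega)]
        have heq : (⟨t + 2 - 1, show t + 2 - 1 < N by omega⟩ : Fin N) = ⟨t + 1, h2⟩ :=
          Fin.ext (by show t + 2 - 1 = t + 1; omega)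
        rw [heq]
      have e2 : entry π (t + 1) = (π ⟨t, h1⟩ : ℕ) + 1 := by
        rw [entry, dif_pos (show t + 1 - 1 < N by omega)]
        have heq : (⟨t + 1 - 1, show t + 1 - 1 < N by omega⟩ : Fin N) = ⟨t, h1⟩ :=
          Fin.ext (by show t + 1 - 1 = t; omega)
        rw [heq]
      refine ⟨by omega, by omega, by omega, by omega, ?_⟩
      rw [e1, e2]
      have := Fin.lt_def.1 hlt
      omega
    have := descent_le_mS (hinv ▸ hdes)
    omega
  have key : ∀ (jv : ℕ) (hj : jv < N) (iv : ℕ) (hi : iv < N), mS S ≤ iv → iv < jv →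
      π ⟨iv, hi⟩ < π ⟨jv, hj⟩ := by
    intro jv
    induction jv with
    | zero => intro hj iv hi _ hlt; omega
    | succ t ih =>
      intro hj iv hi hmi hlt
      have ht : t < N := by omega
      rcases Nat.lt_or_ge iv t with hlt2 | hge
      · exact lt_trans (ih ht iv hi hmi hlt2) (hadj t (by omega) ht hj)
      · have hie : iv = t := by omega
        subst hie
        exact hadj iv hmi hi hj
  intro i j hi hij
  have := key (j : ℕ) j.2 (i : ℕ) i.2 hi hij
  simpa using this

theorem one_le_mS {h : ℕ → ℕ} (hgt : ∀ i : ℕ, 0 < i → i < h i) {S : Finset (ℕ × ℕ)}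
    (hne : S.Nonempty) (hadm : Admissible h S) : 1 ≤ mS S := by
  obtain ⟨N, π, hπ⟩ := hadm
  have hinv : invh h π = S := (Finset.mem_filter.1 hπ).2
  obtain ⟨⟨a, b⟩, hab⟩ := hne
  rw [← hinv, mem_invh] at hab
  obtain ⟨ha1, hab2, hbn, hbh, hent⟩ := hab
  have hdes : ∃ d, 1 ≤ d ∧ (d, d + 1) ∈ S := by
    by_contra hno
    push_neg at hno
    have mono : ∀ t, t ≤ b - a → entry π a ≤ entry π (a + t) := by
      intro t
      induction t with
      | zero => intro _; simp
      | succ s ih =>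
        intro hs
        have h1 := ih (by omega)
        have step : entry π (a + s) ≤ entry π (a + s + 1) := by
          by_contra hcon
          push_neg at hcon
          have hmem : (a + s, a + s + 1) ∈ invh h π := by
            rw [mem_invh]
            have hh := hgt (a + s) (by omega)
            exact ⟨by omega, by omega, by omega, by omega, hcon⟩
          exact hno (a + s) (by omega) (hinv ▸ hmem)
        show entry π a ≤ entry π (a + s + 1)
        omega
    have h2 := mono (b - a) (le_refl _)
    have hba : a + (b - a) = b := by omega
    rw [hba] at h2
    omega
  obtain ⟨d, hd1, hdS⟩ := hdes
  exact le_trans hd1 (descent_le_mS hdS)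

def substMap (A B : Finset ℕ) (x : ℕ) : ℕ :=
  if hx : x ∈ A ∧ B.card = A.card then
    ((B.orderIsoOfFin hx.2) ((A.orderIsoOfFin rfl).symm ⟨x, hx.1⟩) : ℕ)
  else x

theorem substMap_mem {A B : Finset ℕ} (hc : B.card = A.card) {x : ℕ} (hx : x ∈ A) :
    substMap A B x ∈ B := by
  rw [substMap, dif_pos ⟨hx, hc⟩]
  exact ((B.orderIsoOfFin hc) _).2

theorem substMap_not_mem {A B : Finset ℕ} {x : ℕ} (hx : x ∉ A) : substMap A B x = x :=
  dif_neg (fun hh => hx hh.1)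

theorem substMap_lt {A B : Finset ℕ} (hc : B.card = A.card) {x y : ℕ}
    (hx : x ∈ A) (hy : y ∈ A) (hxy : x < y) : substMap A B x < substMap A B y := by
  simp only [substMap]
  rw [dif_pos ⟨hx, hc⟩, dif_pos ⟨hy, hc⟩]
  have h1 : (⟨x, hx⟩ : {z // z ∈ A}) < ⟨y, hy⟩ := Subtype.mk_lt_mk.2 hxy
  have h2 := ((A.orderIsoOfFin rfl).symm).lt_iff_lt.2 h1
  have h3 := (B.orderIsoOfFin hc).lt_iff_lt.2 h2
  exact h3

theorem substMap_inv {A B : Finset ℕ} (hc : B.card = A.card) {x : ℕ} (hx : x ∈ A) :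
    substMap B A (substMap A B x) = x := by
  have hmem : substMap A B x ∈ B := substMap_mem hc hx
  rw [substMap, dif_pos ⟨hmem, hc.symm⟩]
  set i := (A.orderIsoOfFin rfl).symm ⟨x, hx⟩ with hi
  set j := (B.orderIsoOfFin rfl).symm ⟨substMap A B x, hmem⟩ with hj
  have hBj : ((B.orderIsoOfFin rfl) j : ℕ) = substMap A B x := by
    rw [hj, OrderIso.apply_symm_apply]
  have hBi : ((B.orderIsoOfFin hc) i : ℕ) = substMap A B x := by
    rw [substMap, dif_pos ⟨hx, hc⟩]
  have hji : (j : ℕ) = (i : ℕ) := by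
    have : B.orderEmbOfFin rfl j = B.orderEmbOfFin hc i := by
      rw [← Finset.coe_orderIsoOfFin_apply, ← Finset.coe_orderIsoOfFin_apply, hBj, hBi]
    exact Finset.orderEmbOfFin_eq_orderEmbOfFin_iff.1 this
  have hAx : ((A.orderIsoOfFin rfl) i : ℕ) = x := by
    rw [hi, OrderIso.apply_symm_apply]
  have : A.orderEmbOfFin hc.symm j = A.orderEmbOfFin rfl i :=
    Finset.orderEmbOfFin_eq_orderEmbOfFin_iff.2 hji
  rw [← Finset.coe_orderIsoOfFin_apply] at this
  rw [this]
  rw [← hAx, Finset.coe_orderIsoOfFin_apply]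

theorem substMap_surj {A B : Finset ℕ} (hc : B.card = A.card) {y : ℕ} (hy : y ∈ B) :
    ∃ x ∈ A, substMap A B x = y := by
  refine ⟨substMap B A y, substMap_mem hc.symm hy, ?_⟩
  exact substMap_inv hc.symm hy

theorem image_entry_eq {m N : ℕ} (π : Equiv.Perm (Fin N)) (hmN : m ≤ N) :
    (Finset.Icc 1 m).image (entry π) = Finset.image (vOf m π) Finset.univ := by
  ext x
  simp only [Finset.mem_image, Finset.mem_Icc, Finset.mem_univ, true_and]
  constructor
  · rintro ⟨a, ⟨ha1, ham⟩, rfl⟩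
    refine ⟨⟨a - 1, by omega⟩, ?_⟩
    rw [vOf]
    congr 1
    show a - 1 + 1 = a
    omega
  · rintro ⟨i, rfl⟩
    refine ⟨(i : ℕ) + 1, ⟨by omega, by have := i.2; omega⟩, rfl⟩

theorem transfer {h : ℕ → ℕ} {S : Finset (ℕ × ℕ)} {H N N' : ℕ}
    (hgt : ∀ i : ℕ, 0 < i → i < h i)
    (h1H : 1 ≤ H)
    (hhm : ∀ a : ℕ, 1 ≤ a → a ≤ mS S → h a ≤ H)
    (hmN : mS S ≤ N) (hHN : H ≤ N) (hHN' : H ≤ N') (hmN' : mS S ≤ N')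
    {π : Equiv.Perm (Fin N)} (hπ : π ∈ Ih h S N)
    {B : Finset ℕ} (hBsub : B ⊆ Finset.Icc H N')
    (hBcard : B.card = ((Finset.image (vOf (mS S) π) Finset.univ) ∩ Finset.Icc H N).card)
    {v' : Fin (mS S) → ℕ}
    (hv'def : ∀ i, v' i = substMap ((Finset.image (vOf (mS S) π) Finset.univ) ∩ Finset.Icc H N)
      B (vOf (mS S) π i)) :
    buildPerm N' v' ∈ Ih h S N' ∧
    (∀ i, vOf (mS S) (buildPerm N' v') i = v' i) ∧
    (Finset.image (vOf (mS S) (buildPerm N' v')) Finset.univ) ∩ Finset.Icc H N' = B := by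
  set v := vOf (mS S) π with hvdef
  set A := (Finset.image v Finset.univ) ∩ Finset.Icc H N with hA
  have hv : Valid N v := valid_vOf π hmN
  have hmemA : ∀ i : Fin (mS S), v i ∈ A ↔ H ≤ v i := by
    intro i
    rw [hA, Finset.mem_inter, Finset.mem_Icc]
    constructor
    · rintro ⟨_, hH2, _⟩
      exact hH2
    · intro hH2
      exact ⟨Finset.mem_image.2 ⟨i, Finset.mem_univ i, rfl⟩, hH2, vlen hv i⟩
  have hc : B.card = A.card := hBcard
  have hnotA : ∀ i : Fin (mS S), v i ∉ A → v i < H := by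
    intro i hiA
    by_contra hcon
    push_neg at hcon
    exact hiA ((hmemA i).2 hcon)
  have hsmall : ∀ i, v i < H ↔ v' i < H := by
    intro i
    rw [hv'def i]
    by_cases hiA : v i ∈ A
    · have h1 := substMap_mem hc hiA
      have h2 := (Finset.mem_Icc.1 (hBsub h1)).1
      have h3 := (hmemA i).1 hiA
      constructor <;> intro <;> omega
    · rw [substMap_not_mem hiA]
  have heqsmall : ∀ i, v i < H → v' i = v i := by
    intro i hiH
    rw [hv'def i]
    have : v i ∉ A := fun hcon => by have := (hmemA i).1 hcon; omega
    exact substMap_not_mem this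
  have horder : ∀ i j, v i < v j ↔ v' i < v' j := by
    intro i j
    rw [hv'def i, hv'def j]
    by_cases hiA : v i ∈ A <;> by_cases hjA : v j ∈ A
    · constructor
      · exact fun hlt => substMap_lt hc hiA hjA hlt
      · intro hlt
        rcases lt_trichotomy (v i) (v j) with h1 | h1 | h1
        · exact h1
        · rw [h1] at hlt; exact absurd hlt (lt_irrefl _)
        · have := substMap_lt hc hjA hiA h1
          omega
    · have hjH : v j < H := hnotA j hjA
      have hiH : H ≤ v i := (hmemA i).1 hiA
      have e1 : substMap A B (v j) = v j := substMap_not_mem hjA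
      have e2 : H ≤ substMap A B (v i) :=
        (Finset.mem_Icc.1 (hBsub (substMap_mem hc hiA))).1
      constructor <;> intro <;> omega
    · have hiH : v i < H := hnotA i hiA
      have hjH : H ≤ v j := (hmemA j).1 hjA
      have e1 : substMap A B (v i) = v i := substMap_not_mem hiA
      have e2 : H ≤ substMap A B (v j) :=
        (Finset.mem_Icc.1 (hBsub (substMap_mem hc hjA))).1
      constructor <;> intro <;> omega
    · rw [substMap_not_mem hiA, substMap_not_mem hjA]
  have hv' : Valid N' v' := by
    constructor
    · intro i j hij
      by_cases hne : i = j
      · exact hne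
      · exfalso
        have hvne : v i ≠ v j := fun hcon => hne (hv.inj hcon)
        rcases lt_or_gt_of_ne hvne with hlt | hlt
        · have := (horder i j).1 hlt
          omega
        · have := (horder j i).1 hlt
          omega
    · intro i
      rw [Finset.mem_Icc, hv'def i]
      by_cases hiA : v i ∈ A
      · have h2 := Finset.mem_Icc.1 (hBsub (substMap_mem hc hiA))
        exact ⟨by omega, h2.2⟩
      · rw [substMap_not_mem hiA]
        have h1 := vge1 hv i
        have h2 : v i < H := hnotA i hiA
        omega
    · exact hmN'
  have hmono_π : MonoAfter (mS S) π := monoAfter_Ih hgt hπ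
  have hrecon : buildPerm N v = π := buildPerm_vOf π hmN hmono_π
  have hinvπ : invh h π = S := (Finset.mem_filter.1 hπ).2
  have hinveq : invh h (buildPerm N v) = invh h (buildPerm N' v') :=
    invh_buildPerm_eq hv hv' hHN hHN' hhm hsmall heqsmall horder
  have hmem : buildPerm N' v' ∈ Ih h S N' := by
    rw [Ih, Finset.mem_filter]
    exact ⟨Finset.mem_univ _, by rw [← hinveq, hrecon, hinvπ]⟩
  have hvOf : ∀ i, vOf (mS S) (buildPerm N' v') i = v' i := by
    intro i
    have hi1 : (1 : ℕ) ≤ (i : ℕ) + 1 := by omega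
    have hi2 : (i : ℕ) + 1 ≤ N' := by have := i.2; omega
    rw [vOf, entry_buildPerm hv' hi1 hi2,
      dif_pos (show (i : ℕ) + 1 - 1 < mS S by have := i.2; omega)]
    congr 1
  refine ⟨hmem, hvOf, ?_⟩
  ext x
  rw [Finset.mem_inter, Finset.mem_Icc]
  constructor
  · rintro ⟨hximg, hxH, hxN⟩
    rcases Finset.mem_image.1 hximg with ⟨i, _, hxeq⟩
    rw [hvOf i] at hxeq
    subst hxeq
    rw [hv'def i]
    by_cases hiA : v i ∈ A
    · exact substMap_mem hc hiA
    · exfalso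
      have h2 : v i < H := hnotA i hiA
      rw [hv'def i, substMap_not_mem hiA] at hxH
      omega
  · intro hxB
    rcases substMap_surj hc hxB with ⟨y, hyA, hysubst⟩
    have hyimg : y ∈ Finset.image v Finset.univ := (Finset.mem_inter.1 hyA).1
    rcases Finset.mem_image.1 hyimg with ⟨i, _, hyeq⟩
    have hxIcc := Finset.mem_Icc.1 (hBsub hxB)
    refine ⟨?_, hxIcc.1, hxIcc.2⟩
    refine Finset.mem_image.2 ⟨i, Finset.mem_univ i, ?_⟩
    rw [hvOf i, hv'def i, hyeq, hysubst]

end Stmt8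

open Stmt8

/-- For `n ≥ m + h(m) − 1`, `𝓘_h(S;n) = Σ_{k=0}^{m} a_k(S) · C(n − h(m) + 1, k)`. -/
theorem stmt8 (h : ℕ → ℕ) (hmono : ∀ ⦃i j : ℕ⦄, 0 < i → i ≤ j → h i ≤ h j)
    (hgt : ∀ i : ℕ, 0 < i → i < h i) (S : Finset (ℕ × ℕ)) (hSne : S.Nonempty)
    (hadm : Admissible h S) (n : ℕ) (hn : mS S + h (mS S) - 1 ≤ n) :
    Icount h S n =
      ∑ k ∈ Finset.range (mS S + 1), aCoeff h S k * Nat.choose (n - h (mS S) + 1) k := by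
  classical
  have hm1 : 1 ≤ mS S := one_le_mS hgt hSne hadm
  have hmH : mS S < h (mS S) := hgt _ (by omega)
  have h1H : 1 ≤ h (mS S) := by omega
  have hhm : ∀ a : ℕ, 1 ≤ a → a ≤ mS S → h a ≤ h (mS S) := fun a ha1 ha2 => hmono ha1 ha2
  have hHn0 : h (mS S) ≤ mS S + h (mS S) - 1 := by omega
  have hmn0 : mS S ≤ mS S + h (mS S) - 1 := by omega
  have hHn : h (mS S) ≤ n := by omega
  have hmn : mS S ≤ n := by omega
  rw [Icount]
  have hbij : (Ih h S n).card = ((Finset.range (mS S + 1)).sigma (fun k =>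
      ((Ih h S (mS S + h (mS S) - 1)).filter (fun ρ =>
        ((Finset.Icc 1 (mS S)).image (entry ρ)) ∩
            Finset.Icc (h (mS S)) (mS S + h (mS S) - 1)
          = Finset.Icc (h (mS S)) (h (mS S) + k - 1))) ×ˢ
        (Finset.powersetCard k (Finset.Icc (h (mS S)) n)))).card := by
    apply Finset.card_bij'
      (i := fun π _ =>
        ⟨((Finset.image (vOf (mS S) π) Finset.univ) ∩ Finset.Icc (h (mS S)) n).card,
         (buildPerm (mS S + h (mS S) - 1) (fun i => substMap
            ((Finset.image (vOf (mS S) π) Finset.univ) ∩ Finset.Icc (h (mS S)) n)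
            (Finset.Icc (h (mS S)) (h (mS S) +
              ((Finset.image (vOf (mS S) π) Finset.univ) ∩ Finset.Icc (h (mS S)) n).card - 1))
            (vOf (mS S) π i)),
          (Finset.image (vOf (mS S) π) Finset.univ) ∩ Finset.Icc (h (mS S)) n)⟩)
      (j := fun x _ => buildPerm n (fun i => substMap
          (Finset.Icc (h (mS S)) (h (mS S) + x.1 - 1)) x.2.2 (vOf (mS S) x.2.1 i)))
    case hi =>
      intro π hπ
      set k := ((Finset.image (vOf (mS S) π) Finset.univ) ∩ Finset.Icc (h (mS S)) n).card
        with hk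
      have hkm : k ≤ mS S := by
        rw [hk]
        calc ((Finset.image (vOf (mS S) π) Finset.univ) ∩ Finset.Icc (h (mS S)) n).card
            ≤ (Finset.image (vOf (mS S) π) Finset.univ).card :=
              Finset.card_le_card Finset.inter_subset_left
          _ ≤ (Finset.univ : Finset (Fin (mS S))).card := Finset.card_image_le
          _ = mS S := by rw [Finset.card_univ, Fintype.card_fin]
      have hB0card : (Finset.Icc (h (mS S)) (h (mS S) + k - 1)).card = k := by
        rw [Nat.card_Icc]; omega
      obtain ⟨hmem, hvOfc, hWc⟩ := transfer hgt h1H hhm hmn hHn hHn0 hmn0 hπ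
        (B := Finset.Icc (h (mS S)) (h (mS S) + k - 1))
        (Finset.Icc_subset_Icc_right (by omega))
        (hB0card.trans hk)
        (v' := fun i => substMap
          ((Finset.image (vOf (mS S) π) Finset.univ) ∩ Finset.Icc (h (mS S)) n)
          (Finset.Icc (h (mS S)) (h (mS S) + k - 1)) (vOf (mS S) π i))
        (fun i => rfl)
      simp only [Finset.mem_sigma, Finset.mem_product]
      refine ⟨Finset.mem_range.2 (by omega), ?_, ?_⟩
      · refine Finset.mem_filter.2 ⟨hmem, ?_⟩
        rw [image_entry_eq _ hmn0]
        exact hWc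
      · exact Finset.mem_powersetCard.2 ⟨Finset.inter_subset_right, hk.symm⟩
    case hj =>
      rintro ⟨k, ρ, W⟩ hx
      simp only [Finset.mem_sigma, Finset.mem_product] at hx
      obtain ⟨hkr, hρ, hW⟩ := hx
      obtain ⟨hρIh, hρfib⟩ := Finset.mem_filter.1 hρ
      obtain ⟨hWsub, hWcard⟩ := Finset.mem_powersetCard.1 hW
      have hfib : (Finset.image (vOf (mS S) ρ) Finset.univ) ∩
          Finset.Icc (h (mS S)) (mS S + h (mS S) - 1)
          = Finset.Icc (h (mS S)) (h (mS S) + k - 1) := by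
        rw [← image_entry_eq _ hmn0]
        exact hρfib
      have hBcard : W.card = ((Finset.image (vOf (mS S) ρ) Finset.univ) ∩
          Finset.Icc (h (mS S)) (mS S + h (mS S) - 1)).card := by
        rw [hfib, Nat.card_Icc]
        have hkm : k ≤ mS S := by
          have := Finset.mem_range.1 hkr; omega
        omega
      obtain ⟨hmem, hvOf1, hW1⟩ := transfer hgt h1H hhm hmn0 hHn0 hHn hmn hρIh
        (B := W) hWsub hBcard
        (v' := fun i => substMap
          (Finset.Icc (h (mS S)) (h (mS S) + k - 1)) W (vOf (mS S) ρ i))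
        (fun i => by rw [hfib])
      exact hmem
    case left_inv =>
      intro π hπ
      dsimp only
      set k := ((Finset.image (vOf (mS S) π) Finset.univ) ∩ Finset.Icc (h (mS S)) n).card
        with hk
      have hkm : k ≤ mS S := by
        rw [hk]
        calc ((Finset.image (vOf (mS S) π) Finset.univ) ∩ Finset.Icc (h (mS S)) n).card
            ≤ (Finset.image (vOf (mS S) π) Finset.univ).card :=
              Finset.card_le_card Finset.inter_subset_left
          _ ≤ (Finset.univ : Finset (Fin (mS S))).card := Finset.card_image_le
          _ = mS S := by rw [Finset.card_univ, Fintype.card_fin]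
      have hB0card : (Finset.Icc (h (mS S)) (h (mS S) + k - 1)).card = k := by
        rw [Nat.card_Icc]; omega
      have hc : (Finset.Icc (h (mS S)) (h (mS S) + k - 1)).card =
          ((Finset.image (vOf (mS S) π) Finset.univ) ∩ Finset.Icc (h (mS S)) n).card :=
        hB0card.trans hk
      obtain ⟨hmem, hvOfc, hWc⟩ := transfer hgt h1H hhm hmn hHn hHn0 hmn0 hπ
        (B := Finset.Icc (h (mS S)) (h (mS S) + k - 1))
        (Finset.Icc_subset_Icc_right (by omega))
        hc
        (v' := fun i => substMap
          ((Finset.image (vOf (mS S) π) Finset.univ) ∩ Finset.Icc (h (mS S)) n)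
          (Finset.Icc (h (mS S)) (h (mS S) + k - 1)) (vOf (mS S) π i))
        (fun i => rfl)
      have hv : Valid n (vOf (mS S) π) := valid_vOf π hmn
      have hfun : (fun i => substMap
          (Finset.Icc (h (mS S)) (h (mS S) + k - 1))
          ((Finset.image (vOf (mS S) π) Finset.univ) ∩ Finset.Icc (h (mS S)) n)
          (vOf (mS S) (buildPerm (mS S + h (mS S) - 1) (fun i => substMap
            ((Finset.image (vOf (mS S) π) Finset.univ) ∩ Finset.Icc (h (mS S)) n)
            (Finset.Icc (h (mS S)) (h (mS S) + k - 1)) (vOf (mS S) π i))) i))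
          = vOf (mS S) π := by
        funext i
        rw [hvOfc i]
        by_cases hin : vOf (mS S) π i ∈
            (Finset.image (vOf (mS S) π) Finset.univ) ∩ Finset.Icc (h (mS S)) n
        · exact substMap_inv hc hin
        · have hsm : vOf (mS S) π i < h (mS S) := by
            have h1 := vge1 hv i
            have h2 := vlen hv i
            by_contra hcon
            push_neg at hcon
            exact hin (Finset.mem_inter.2
              ⟨Finset.mem_image.2 ⟨i, Finset.mem_univ i, rfl⟩, Finset.mem_Icc.2 ⟨hcon, h2⟩⟩)
          rw [substMap_not_mem hin]
          apply substMap_not_mem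
          rw [Finset.mem_Icc]
          omega
      show buildPerm n _ = π
      rw [hfun]
      exact buildPerm_vOf π hmn (monoAfter_Ih hgt hπ)
    case right_inv =>
      rintro ⟨k, ρ, W⟩ hx
      dsimp only
      simp only [Finset.mem_sigma, Finset.mem_product] at hx
      obtain ⟨hkr, hρ, hW⟩ := hx
      obtain ⟨hρIh, hρfib⟩ := Finset.mem_filter.1 hρ
      obtain ⟨hWsub, hWcard⟩ := Finset.mem_powersetCard.1 hW
      have hkm : k ≤ mS S := by
        have := Finset.mem_range.1 hkr; omega
      have hfib : (Finset.image (vOf (mS S) ρ) Finset.univ) ∩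
          Finset.Icc (h (mS S)) (mS S + h (mS S) - 1)
          = Finset.Icc (h (mS S)) (h (mS S) + k - 1) := by
        rw [← image_entry_eq _ hmn0]
        exact hρfib
      have hB0card : (Finset.Icc (h (mS S)) (h (mS S) + k - 1)).card = k := by
        rw [Nat.card_Icc]; omega
      have hBcard : W.card = ((Finset.image (vOf (mS S) ρ) Finset.univ) ∩
          Finset.Icc (h (mS S)) (mS S + h (mS S) - 1)).card := by
        rw [hfib, Nat.card_Icc]
        omega
      obtain ⟨hmem, hvOf1, hW1⟩ := transfer hgt h1H hhm hmn0 hHn0 hHn hmn hρIh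
        (B := W) hWsub hBcard
        (v' := fun i => substMap
          (Finset.Icc (h (mS S)) (h (mS S) + k - 1)) W (vOf (mS S) ρ i))
        (fun i => by rw [hfib])
      have hvρ : Valid (mS S + h (mS S) - 1) (vOf (mS S) ρ) := valid_vOf ρ hmn0
      have hcWB : W.card = (Finset.Icc (h (mS S)) (h (mS S) + k - 1)).card := by
        rw [hB0card, hWcard]
      have hfun : (fun i => substMap W
          (Finset.Icc (h (mS S)) (h (mS S) + k - 1))
          (vOf (mS S) (buildPerm n (fun i => substMap
            (Finset.Icc (h (mS S)) (h (mS S) + k - 1)) W (vOf (mS S) ρ i))) i))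
          = vOf (mS S) ρ := by
        funext i
        rw [hvOf1 i]
        by_cases hin : vOf (mS S) ρ i ∈ Finset.Icc (h (mS S)) (h (mS S) + k - 1)
        · exact substMap_inv hcWB hin
        · have hsm : vOf (mS S) ρ i < h (mS S) := by
            have h1 := vge1 hvρ i
            have h2 := vlen hvρ i
            by_contra hcon
            push_neg at hcon
            have : vOf (mS S) ρ i ∈ (Finset.image (vOf (mS S) ρ) Finset.univ) ∩
                Finset.Icc (h (mS S)) (mS S + h (mS S) - 1) := Finset.mem_inter.2
              ⟨Finset.mem_image.2 ⟨i, Finset.mem_univ i, rfl⟩, Finset.mem_Icc.2 ⟨hcon, h2⟩⟩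
            rw [hfib] at this
            exact hin this
          rw [substMap_not_mem hin]
          apply substMap_not_mem
          intro hconW
          have := Finset.mem_Icc.1 (hWsub hconW)
          omega
      have hρrec : buildPerm (mS S + h (mS S) - 1) (vOf (mS S) ρ) = ρ :=
        buildPerm_vOf ρ hmn0 (monoAfter_Ih hgt hρIh)
      show (⟨_, (_, _)⟩ : (_ : ℕ) × Equiv.Perm (Fin (mS S + h (mS S) - 1)) × Finset ℕ)
        = ⟨k, (ρ, W)⟩
      rw [hW1, hWcard]
      congr 1
      rw [hfun, hρrec]
  rw [hbij, Finset.card_sigma]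
  apply Finset.sum_congr rfl
  intro k hk
  rw [Finset.card_product]
  have hch : (Finset.powersetCard k (Finset.Icc (h (mS S)) n)).card
      = Nat.choose (n - h (mS S) + 1) k := by
    rw [Finset.card_powersetCard, Nat.card_Icc]
    congr 1
    omega
  rw [hch]
  rfl
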